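/- Suppose 0 < q ≤ p ≤ 1 and 1 < r < ∞. Let φ₁(Q) = ‖χ_Q‖_{(L^q,ℓ^p)}/|Q| for cubes Q, let δ ≥ ⌊d(1/q−1)⌋ be an integer, and let g ∈ 𝓛_{r′,φ₁,δ}^{loc} (the local Campanato-type space). Then for every finite linear combination f = ∑_{n=0}^m λ_n a_n of local (q,r,δ)-atoms (with cubes Q^n), the pairing satisfies |∫_{ℝ^d} g(x) f(x) dx| ≤ ‖∑_{n=0}^m (|λ_n|/‖χ_{Q^n}‖_q)^η χ_{Q^n}‖_{q/η, p/η}^{1/η} · ‖g‖_{𝓛_{r′,φ₁,δ}^{loc}} for any fixed 0 < η < q, where 1/r + 1/r′ = 1. -/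

import Mathlib

open MeasureTheory Metric Set Filter
open scoped ENNReal NNReal

noncomputable section

/-- The unit cube `Q_k = k + [0,1)^d` in `ℝ^d`. -/
def unitCube (d : ℕ) (k : Fin d → ℤ) : Set (Fin d → ℝ) :=
  {x | ∀ i, (k i : ℝ) ≤ x i ∧ x i < (k i : ℝ) + 1}

/-- The `ℓ^p` norm over `ℤ^d` of an `ℝ≥0∞`-valued sequence. -/
def ellNorm (d : ℕ) (p : ℝ≥0∞) (a : (Fin d → ℤ) → ℝ≥0∞) : ℝ≥0∞ :=
  if p = ∞ then ⨆ k, a k else (∑' k, a k ^ p.toReal) ^ (1 / p.toReal)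

/-- The `L^q` norm of an `ℝ≥0∞`-valued function on a set `s ⊆ ℝ^d`. -/
def setLqNorm {d : ℕ} (q : ℝ≥0∞) (g : (Fin d → ℝ) → ℝ≥0∞) (s : Set (Fin d → ℝ)) : ℝ≥0∞ :=
  if q = ∞ then essSup g (volume.restrict s)
  else (∫⁻ x in s, g x ^ q.toReal) ^ (1 / q.toReal)

/-- The Wiener amalgam quasi-norm of an `ℝ≥0∞`-valued function:
`ℓ^p` (over `ℤ^d`) of the `L^q` norms over the unit cubes `Q_k`. -/
def amalgamNormE (d : ℕ) (q p : ℝ≥0∞) (g : (Fin d → ℝ) → ℝ≥0∞) : ℝ≥0∞ :=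
  ellNorm d p fun k => setLqNorm q g (unitCube d k)

/-- The Wiener amalgam quasi-norm `‖f‖_{q,p}` of `f : ℝ^d → ℂ`. -/
def amalgamNorm (d : ℕ) (q p : ℝ≥0∞) (f : (Fin d → ℝ) → ℂ) : ℝ≥0∞ :=
  amalgamNormE d q p fun x => (‖f x‖₊ : ℝ≥0∞)

/-- The closed cube with center `c` and side length `ℓ` in `ℝ^d`. -/
def cube (d : ℕ) (c : Fin d → ℝ) (ℓ : ℝ) : Set (Fin d → ℝ) :=
  {x | ∀ i, |x i - c i| ≤ ℓ / 2}

/-- The indicator function of the cube with center `c` and side length `ℓ`. -/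
def cubeInd (d : ℕ) (c : Fin d → ℝ) (ℓ : ℝ) : (Fin d → ℝ) → ℂ :=
  (cube d c ℓ).indicator fun _ => 1

/-- A local `(q, r, s)`-atom `a` associated with the cube of center `c` and side length
`ℓ` (so `|Q| = ℓ^d`): `a` is supported in `Q`, `‖a‖_{L^r} ≤ |Q|^{1/r - 1/q}`, and the
vanishing-moment conditions up to order `s` hold when `|Q| < 1`. -/
def IsLocalAtom (d : ℕ) (q r : ℝ≥0∞) (s : ℕ) (a : (Fin d → ℝ) → ℂ)
    (c : Fin d → ℝ) (ℓ : ℝ) : Prop :=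
  0 < ℓ ∧ Measurable a ∧ Function.support a ⊆ cube d c ℓ ∧
    eLpNorm a r volume ≤ ENNReal.ofReal (ℓ ^ d) ^ (1 / r.toReal - 1 / q.toReal) ∧
    (ℓ ^ d < 1 → ∀ β : Fin d → ℕ, (∑ i, β i) ≤ s →
      ∫ x : Fin d → ℝ, (∏ i, (x i : ℂ) ^ β i) * a x = 0)

/-- The dilated function `φ_t(x) = t^{-d} φ(x/t)`. -/
def phit (d : ℕ) (φ : (Fin d → ℝ) → ℂ) (t : ℝ) : (Fin d → ℝ) → ℂ :=
  fun x => ((t ^ d : ℝ))⁻¹ • φ (t⁻¹ • x)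

/-- Convolution of two functions on `ℝ^d`. -/
def convFn (d : ℕ) (f g : (Fin d → ℝ) → ℂ) (x : Fin d → ℝ) : ℂ :=
  ∫ y, f y * g (x - y)

/-- The local maximal function `M_loc(f)(x) = sup_{0 < t ≤ 1} |(f ∗ φ_t)(x)|`. -/
def MlocFn (d : ℕ) (φ f : (Fin d → ℝ) → ℂ) (x : Fin d → ℝ) : ℝ≥0∞ :=
  ⨆ t : {t : ℝ // 0 < t ∧ t ≤ 1}, (‖convFn d f (phit d φ (t : ℝ)) x‖₊ : ℝ≥0∞)

/-- The centered Hardy–Littlewood maximal function of `f : ℝ^d → ℂ`. -/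
def maximalFn (d : ℕ) (f : (Fin d → ℝ) → ℂ) (x : Fin d → ℝ) : ℝ≥0∞ :=
  ⨆ r : {r : ℝ // 0 < r},
    (volume (ball x (r : ℝ)))⁻¹ * ∫⁻ y in ball x (r : ℝ), (‖f y‖₊ : ℝ≥0∞)

/-- `P : ℝ^d → ℂ` is a polynomial function of degree at most `δ`. -/
def IsPolyDeg (d δ : ℕ) (P : (Fin d → ℝ) → ℂ) : Prop :=
  ∃ coef : (Fin d → Fin (δ + 1)) → ℂ, ∀ x, P x =
    ∑ β : Fin d → Fin (δ + 1),
      if (∑ i, (β i : ℕ)) ≤ δ then coef β * ∏ i, (x i : ℂ) ^ (β i : ℕ) else 0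

/-- The function `φ₁(Q) = ‖χ_Q‖_{(L^q,ℓ^p)} / |Q|` for the cube of center `c` and side
length `ℓ`. -/
def phiOne (d : ℕ) (q p : ℝ≥0∞) (c : Fin d → ℝ) (ℓ : ℝ) : ℝ≥0∞ :=
  amalgamNorm d q p (cubeInd d c ℓ) / ENNReal.ofReal (ℓ ^ d)

/-- The local Campanato-type quasi-norm `‖g‖_{𝓛^{loc}_{r',φ₁,δ}}`, relative to a given
assignment `P` of (projection) polynomials to cubes. -/
def campNormLoc (d : ℕ) (q p r' : ℝ≥0∞) (g : (Fin d → ℝ) → ℂ)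
    (P : (Fin d → ℝ) → ℝ → (Fin d → ℝ) → ℂ) : ℝ≥0∞ :=
  (⨆ (c : Fin d → ℝ) (ℓ : {ℓ : ℝ // 0 < ℓ ∧ 1 ≤ ℓ ^ d}),
    (phiOne d q p c ℓ)⁻¹ * ((ENNReal.ofReal ((ℓ : ℝ) ^ d))⁻¹ *
      ∫⁻ x in cube d c ℓ, (‖g x‖₊ : ℝ≥0∞) ^ r'.toReal) ^ (1 / r'.toReal)) +
  (⨆ (c : Fin d → ℝ) (ℓ : {ℓ : ℝ // 0 < ℓ ∧ ℓ ^ d < 1}),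
    (phiOne d q p c ℓ)⁻¹ * ((ENNReal.ofReal ((ℓ : ℝ) ^ d))⁻¹ *
      ∫⁻ x in cube d c ℓ, (‖g x - P c ℓ x‖₊ : ℝ≥0∞) ^ r'.toReal) ^ (1 / r'.toReal))


section Lemmas
variable {α : Type*} [MeasurableSpace α] {μ : Measure α}

/-- Reverse Minkowski inequality for `0 < t ≤ 1`. -/
theorem rev_minkowski {t : ℝ} (ht0 : 0 < t) (ht1 : t ≤ 1) {f g : α → ℝ≥0∞}
    (hf : AEMeasurable f μ) (hg : AEMeasurable g μ) :
    (∫⁻ a, f a ^ t ∂μ) ^ (1/t) + (∫⁻ a, g a ^ t ∂μ) ^ (1/t)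
      ≤ (∫⁻ a, (f a + g a) ^ t ∂μ) ^ (1/t) := by
  rcases eq_or_lt_of_le ht1 with h1 | h1
  · subst h1
    simp only [ENNReal.rpow_one, one_div_one]
    rw [lintegral_add_left' hf]
  set S := ∫⁻ a, (f a + g a) ^ t ∂μ with hS
  by_cases hS0 : S = 0
  · have h0 : (fun a => (f a + g a) ^ t) =ᵐ[μ] 0 := by
      rw [← lintegral_eq_zero_iff' (f := fun a => (f a + g a) ^ t) ((hf.add hg).pow_const t)]; exact hS0
    have hfg0 : ∀ᵐ a ∂μ, f a = 0 ∧ g a = 0 := by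
      filter_upwards [h0] with a ha
      simp only [Pi.zero_apply] at ha
      rw [ENNReal.rpow_eq_zero_iff] at ha
      rcases ha with ⟨ha, _⟩ | ⟨_, hneg⟩
      · constructor
        · exact le_antisymm (le_trans le_self_add ha.le) zero_le
        · exact le_antisymm (le_trans le_add_self ha.le) zero_le
      · linarith
    have hfz : ∫⁻ a, f a ^ t ∂μ = 0 := by
      rw [lintegral_eq_zero_iff' (hf.pow_const t)]
      filter_upwards [hfg0] with a ha
      simp [ha.1, ENNReal.zero_rpow_of_pos ht0]
    have hgz : ∫⁻ a, g a ^ t ∂μ = 0 := by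
      rw [lintegral_eq_zero_iff' (hg.pow_const t)]
      filter_upwards [hfg0] with a ha
      simp [ha.2, ENNReal.zero_rpow_of_pos ht0]
    rw [hfz, hgz, ENNReal.zero_rpow_of_pos (by positivity : (0:ℝ) < 1/t), add_zero]
    exact zero_le
  by_cases hStop : S = ∞
  · rw [hStop, ENNReal.top_rpow_of_pos (by positivity)]; exact le_top
  -- main case
  have hae : ∀ᵐ a ∂μ, f a + g a ≠ ∞ := by
    have := ae_lt_top' (f := fun a => (f a + g a) ^ t) ((hf.add hg).pow_const t) hStop
    filter_upwards [this] with a ha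
    intro hcon
    rw [hcon, ENNReal.top_rpow_of_pos ht0] at ha
    exact (lt_irrefl _ ha)
  set h := fun a => f a + g a with hh
  have hhm : AEMeasurable h μ := hf.add hg
  set X := ∫⁻ a, f a * h a ^ (t - 1) ∂μ with hX
  set Y := ∫⁻ a, g a * h a ^ (t - 1) ∂μ with hY
  have hmul : ∀ᵐ a ∂μ, h a * h a ^ (t - 1) = h a ^ t := by
    filter_upwards [hae] with a ha
    rcases eq_or_ne (h a) 0 with h0 | h0
    · rw [h0, zero_mul, ENNReal.zero_rpow_of_pos ht0]
    · nth_rewrite 1 [← ENNReal.rpow_one (h a)]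
      rw [← ENNReal.rpow_add _ _ h0 ha]
      ring_nf
  have hXY : X + Y = S := by
    rw [hX, hY, ← lintegral_add_left' (f := fun a => f a * h a ^ (t - 1)) (hf.mul (hhm.pow_const _))]
    refine lintegral_congr_ae ?_
    filter_upwards [hmul] with a ha
    rw [← add_mul]
    exact ha
  have hconj : (1/t).HolderConjugate (1/(1-t)) := by
    refine ⟨?_, by positivity, one_div_pos.mpr (by linarith)⟩
    rw [one_div, one_div, inv_inv, inv_inv, inv_one]; ring
  have key : ∀ (u : α → ℝ≥0∞), AEMeasurable u μ → (∀ᵐ a ∂μ, u a ≤ h a) →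
      (∫⁻ a, u a ^ t ∂μ) ^ (1/t) ≤ (∫⁻ a, u a * h a ^ (t-1) ∂μ) * S ^ ((1-t)/t) := by
    intro u hu hule
    have haux : ∫⁻ a, u a ^ t ∂μ ≤
        (∫⁻ a, u a * h a ^ (t-1) ∂μ) ^ t * S ^ (1-t) := by
      have hH := ENNReal.lintegral_mul_le_Lp_mul_Lq μ hconj
        (f := fun a => (u a * h a ^ (t-1)) ^ t) (g := fun a => (h a ^ t) ^ (1-t))
        ((hu.mul (hhm.pow_const _)).pow_const _) ((hhm.pow_const _).pow_const _)
      have e1 : ∫⁻ a, ((fun a => (u a * h a ^ (t-1)) ^ t) * fun a => (h a ^ t) ^ (1-t)) a ∂μ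
          = ∫⁻ a, u a ^ t ∂μ := by
        refine lintegral_congr_ae ?_
        filter_upwards [hae, hule] with a ha hua
        simp only [Pi.mul_apply]
        rcases eq_or_ne (h a) 0 with h0 | h0
        · have hu0 : u a = 0 := le_antisymm (h0 ▸ hua) zero_le
          simp [hu0, h0, ENNReal.zero_rpow_of_pos ht0, ENNReal.top_rpow_of_pos ht0]
        · rw [ENNReal.mul_rpow_of_nonneg _ _ ht0.le, ← ENNReal.rpow_mul, ← ENNReal.rpow_mul,
            mul_assoc, ← ENNReal.rpow_add _ _ h0 ha]
          have : (t - 1) * t + t * (1 - t) = 0 := by ring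
          rw [this, ENNReal.rpow_zero, mul_one]
      have e2 : ∫⁻ a, ((u a * h a ^ (t-1)) ^ t) ^ (1/t) ∂μ = ∫⁻ a, u a * h a ^ (t-1) ∂μ := by
        refine lintegral_congr fun a => ?_
        rw [← ENNReal.rpow_mul, mul_one_div_cancel ht0.ne', ENNReal.rpow_one]
      have e3 : ∫⁻ a, ((h a ^ t) ^ (1-t)) ^ (1/(1-t)) ∂μ = S := by
        refine lintegral_congr fun a => ?_
        rw [← ENNReal.rpow_mul, mul_one_div_cancel (by linarith : 1 - t ≠ 0), ENNReal.rpow_one]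
      rw [e1, e2, e3] at hH
      calc ∫⁻ a, u a ^ t ∂μ ≤ (∫⁻ a, u a * h a ^ (t-1) ∂μ) ^ (1/(1/t)) * S ^ (1/(1/(1-t))) := hH
        _ = _ := by rw [one_div_one_div, one_div_one_div]
    calc (∫⁻ a, u a ^ t ∂μ) ^ (1/t)
        ≤ ((∫⁻ a, u a * h a ^ (t-1) ∂μ) ^ t * S ^ (1-t)) ^ (1/t) := by
          exact ENNReal.rpow_le_rpow haux (by positivity)
      _ = (∫⁻ a, u a * h a ^ (t-1) ∂μ) * S ^ ((1-t)/t) := by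
          rw [ENNReal.mul_rpow_of_nonneg _ _ (by positivity : (0:ℝ) ≤ 1/t),
            ← ENNReal.rpow_mul, ← ENNReal.rpow_mul, mul_one_div_cancel ht0.ne',
            ENNReal.rpow_one, mul_one_div]
  have hfkey := key f hf (by filter_upwards with a; exact le_self_add)
  have hgkey := key g hg (by filter_upwards with a; exact le_add_self)
  calc (∫⁻ a, f a ^ t ∂μ) ^ (1/t) + (∫⁻ a, g a ^ t ∂μ) ^ (1/t)
      ≤ X * S ^ ((1-t)/t) + Y * S ^ ((1-t)/t) := add_le_add hfkey hgkey
    _ = (X + Y) * S ^ ((1-t)/t) := (add_mul _ _ _).symm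
    _ = S * S ^ ((1-t)/t) := by rw [hXY]
    _ = S ^ (1/t) := by
        nth_rewrite 1 [← ENNReal.rpow_one S]
        rw [← ENNReal.rpow_add _ _ hS0 hStop]
        congr 1
        field_simp
        ring


theorem rev_minkowski_finset {ι : Type*} (s : Finset ι) {t : ℝ} (ht0 : 0 < t) (ht1 : t ≤ 1)
    {f : ι → α → ℝ≥0∞} (hf : ∀ i, AEMeasurable (f i) μ) :
    ∑ i ∈ s, (∫⁻ a, f i a ^ t ∂μ) ^ (1/t) ≤ (∫⁻ a, (∑ i ∈ s, f i a) ^ t ∂μ) ^ (1/t) := by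
  induction s using Finset.cons_induction with
  | empty => simp
  | cons j s' hi ih =>
    simp only [Finset.sum_cons]
    calc (∫⁻ a, f j a ^ t ∂μ) ^ (1/t) + ∑ i ∈ s', (∫⁻ a, f i a ^ t ∂μ) ^ (1/t)
        ≤ (∫⁻ a, f j a ^ t ∂μ) ^ (1/t) + (∫⁻ a, (∑ i ∈ s', f i a) ^ t ∂μ) ^ (1/t) :=
          add_le_add le_rfl ih
      _ ≤ _ := rev_minkowski ht0 ht1 (hf j) (Finset.aemeasurable_fun_sum _ fun i _ => hf i)

theorem rev_minkowski_tsum {ι ν : Type*} [Countable ι] [MeasurableSpace ι]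
    [MeasurableSingletonClass ι] {t : ℝ} (ht0 : 0 < t) (ht1 : t ≤ 1)
    (s : Finset ν) (f : ν → ι → ℝ≥0∞) :
    ∑ n ∈ s, (∑' k, f n k ^ t) ^ (1/t) ≤ (∑' k, (∑ n ∈ s, f n k) ^ t) ^ (1/t) := by
  have h1 : ∀ (g : ι → ℝ≥0∞), ∑' k, g k = ∫⁻ k, g k ∂Measure.count :=
    fun g => (lintegral_count g).symm
  simp only [h1]
  exact rev_minkowski_finset s ht0 ht1 fun i => (measurable_of_countable _).aemeasurable

theorem rpow_finset_sum_le {ι : Type*} (s : Finset ι) {t : ℝ} (ht0 : 0 < t) (ht1 : t ≤ 1)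
    (y : ι → ℝ≥0∞) : (∑ i ∈ s, y i) ^ t ≤ ∑ i ∈ s, y i ^ t := by
  induction s using Finset.cons_induction with
  | empty => simp [ENNReal.zero_rpow_of_pos ht0]
  | cons j s' hi ih =>
    simp only [Finset.sum_cons]
    exact le_trans (ENNReal.rpow_add_le_add_rpow _ _ ht0.le ht1) (add_le_add le_rfl ih)

theorem finset_sum_le_rpow {ι : Type*} (s : Finset ι) {t : ℝ} (ht0 : 0 < t) (ht1 : t ≤ 1)
    (y : ι → ℝ≥0∞) : ∑ i ∈ s, y i ≤ (∑ i ∈ s, y i ^ t) ^ (1/t) := by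
  have h := ENNReal.rpow_le_rpow (rpow_finset_sum_le s ht0 ht1 y)
    (by positivity : (0:ℝ) ≤ 1/t)
  rwa [← ENNReal.rpow_mul, mul_one_div_cancel ht0.ne', ENNReal.rpow_one] at h

-- geometry lemmas
lemma cube_eq_pi (d : ℕ) (c : Fin d → ℝ) (ℓ : ℝ) :
    cube d c ℓ = Set.pi Set.univ (fun i => Icc (c i - ℓ/2) (c i + ℓ/2)) := by
  ext x
  simp only [cube, mem_setOf_eq, Set.mem_pi, Set.mem_univ, forall_true_left, mem_Icc, abs_le]
  refine forall_congr' fun i => ?_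
  constructor <;> rintro ⟨h1, h2⟩ <;> constructor <;> linarith

lemma measurableSet_cube (d : ℕ) (c : Fin d → ℝ) (ℓ : ℝ) : MeasurableSet (cube d c ℓ) := by
  rw [cube_eq_pi]
  exact MeasurableSet.univ_pi fun i => measurableSet_Icc

lemma isCompact_cube (d : ℕ) (c : Fin d → ℝ) (ℓ : ℝ) : IsCompact (cube d c ℓ) := by
  rw [cube_eq_pi]
  exact isCompact_univ_pi fun i => isCompact_Icc

lemma volume_cube (d : ℕ) (c : Fin d → ℝ) {ℓ : ℝ} (hℓ : 0 ≤ ℓ) :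
    volume (cube d c ℓ) = ENNReal.ofReal (ℓ ^ d) := by
  rw [cube_eq_pi, volume_pi_pi]
  have : ∀ i : Fin d, volume (Icc (c i - ℓ/2) (c i + ℓ/2)) = ENNReal.ofReal ℓ := by
    intro i
    rw [Real.volume_Icc]
    congr 1
    ring
  simp only [this, Finset.prod_const, Finset.card_univ, Fintype.card_fin]
  rw [← ENNReal.ofReal_pow hℓ]

lemma unitCube_eq_pi (d : ℕ) (k : Fin d → ℤ) :
    unitCube d k = Set.pi Set.univ (fun i => Ico (k i : ℝ) ((k i : ℝ) + 1)) := by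
  ext x
  simp [unitCube, Set.mem_pi, mem_Ico]

lemma measurableSet_unitCube (d : ℕ) (k : Fin d → ℤ) : MeasurableSet (unitCube d k) := by
  rw [unitCube_eq_pi]
  exact MeasurableSet.univ_pi fun i => measurableSet_Ico

lemma volume_unitCube (d : ℕ) (k : Fin d → ℤ) : volume (unitCube d k) = 1 := by
  rw [unitCube_eq_pi, volume_pi_pi]
  simp [Real.volume_Ico]

lemma cubeInd_nnnorm (d : ℕ) (c : Fin d → ℝ) (ℓ : ℝ) (x : Fin d → ℝ) :
    ((‖cubeInd d c ℓ x‖₊ : ℝ≥0∞)) = (cube d c ℓ).indicator (fun _ => (1:ℝ≥0∞)) x := by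
  rw [cubeInd, nnnorm_indicator_eq_indicator_nnnorm]
  by_cases hx : x ∈ cube d c ℓ <;> simp [hx]

noncomputable section
variable {d : ℕ} {q p : ℝ≥0∞} {c : Fin d → ℝ} {ℓ : ℝ}

lemma setLq_cubeInd (hq0 : q ≠ 0) (hq : q ≠ ∞) (k : Fin d → ℤ) :
    setLqNorm q (fun x => (‖cubeInd d c ℓ x‖₊ : ℝ≥0∞)) (unitCube d k)
      = (volume (cube d c ℓ ∩ unitCube d k)) ^ (1/q.toReal) := by
  have hq' : 0 < q.toReal := ENNReal.toReal_pos hq0 hq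
  rw [setLqNorm, if_neg hq]
  congr 1
  have hpt : ∀ x, ((‖cubeInd d c ℓ x‖₊ : ℝ≥0∞)) ^ q.toReal
      = (cube d c ℓ).indicator (fun _ => (1:ℝ≥0∞)) x := by
    intro x
    rw [cubeInd_nnnorm]
    by_cases hx : x ∈ cube d c ℓ <;>
      simp [hx, ENNReal.zero_rpow_of_pos hq']
  simp only [hpt]
  rw [lintegral_indicator (measurableSet_cube _ _ _), setLIntegral_one,
    Measure.restrict_apply (measurableSet_cube _ _ _)]

lemma vol_cube_inter_pos (hℓ : 0 < ℓ) :
    0 < volume (cube d c ℓ ∩ unitCube d (fun i => ⌊c i⌋)) := by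
  set δ : Fin d → ℝ := fun i => min (ℓ/2) ((⌊c i⌋ : ℝ) + 1 - c i) with hδ
  have hδpos : ∀ i, 0 < δ i := by
    intro i
    refine lt_min (by linarith) ?_
    have := Int.lt_floor_add_one (c i)
    linarith
  set S : Set (Fin d → ℝ) := Set.pi Set.univ (fun i => Ico (c i) (c i + δ i)) with hSdef
  have hS1 : S ⊆ cube d c ℓ := by
    intro x hx i
    have hxi := hx i (Set.mem_univ i)
    simp only [mem_Ico] at hxi
    have h1 : δ i ≤ ℓ/2 := min_le_left _ _
    rw [abs_le]
    constructor <;> [skip; skip] <;> [linarith [hxi.1]; skip]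
    linarith [hxi.2, h1]
  have hS2 : S ⊆ unitCube d (fun i => ⌊c i⌋) := by
    intro x hx i
    have hxi := hx i (Set.mem_univ i)
    simp only [mem_Ico] at hxi
    have h2 : δ i ≤ (⌊c i⌋ : ℝ) + 1 - c i := min_le_right _ _
    exact ⟨le_trans (Int.floor_le (c i)) hxi.1, by linarith [hxi.2]⟩
  have hvolS : 0 < volume S := by
    rw [hSdef, volume_pi_pi]
    rw [pos_iff_ne_zero, Finset.prod_ne_zero_iff]
    intro i _
    rw [Real.volume_Ico]
    simp only [add_sub_cancel_left]
    exact (ENNReal.ofReal_pos.mpr (hδpos i)).ne'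
  exact lt_of_lt_of_le hvolS (measure_mono (subset_inter hS1 hS2))

lemma vol_cube_inter_le_one (k : Fin d → ℤ) :
    volume (cube d c ℓ ∩ unitCube d k) ≤ 1 := by
  calc volume (cube d c ℓ ∩ unitCube d k) ≤ volume (unitCube d k) :=
        measure_mono inter_subset_right
    _ = 1 := volume_unitCube d k

lemma amalgam_cubeInd_ne_zero (hq0 : q ≠ 0) (hq : q ≠ ∞) (hp0 : p ≠ 0) (hp : p ≠ ∞)
    (hℓ : 0 < ℓ) : amalgamNorm d q p (cubeInd d c ℓ) ≠ 0 := by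
  have hq' : 0 < q.toReal := ENNReal.toReal_pos hq0 hq
  have hp' : 0 < p.toReal := ENNReal.toReal_pos hp0 hp
  rw [amalgamNorm, amalgamNormE, ellNorm, if_neg hp]
  set k₀ : Fin d → ℤ := fun i => ⌊c i⌋ with hk₀
  have hT : (0:ℝ≥0∞) < setLqNorm q (fun x => (‖cubeInd d c ℓ x‖₊ : ℝ≥0∞)) (unitCube d k₀) := by
    rw [setLq_cubeInd hq0 hq]
    exact ENNReal.rpow_pos (vol_cube_inter_pos hℓ)
      (ne_top_of_le_ne_top ENNReal.one_ne_top (vol_cube_inter_le_one k₀))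
  intro hcon
  rw [ENNReal.rpow_eq_zero_iff] at hcon
  rcases hcon with ⟨hsum, _⟩ | ⟨_, hneg⟩
  · have hle := ENNReal.le_tsum (f := fun k =>
      setLqNorm q (fun x => (‖cubeInd d c ℓ x‖₊ : ℝ≥0∞)) (unitCube d k) ^ p.toReal) k₀
    rw [hsum] at hle
    have := le_antisymm hle zero_le
    rw [ENNReal.rpow_eq_zero_iff] at this
    rcases this with ⟨hz, _⟩ | ⟨_, hn⟩
    · exact hT.ne' hz
    · linarith
  · have : 0 < 1/p.toReal := by positivity
    linarith

lemma amalgam_cubeInd_ne_top (hq0 : q ≠ 0) (hq : q ≠ ∞) (hp0 : p ≠ 0) (hp : p ≠ ∞)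
    (hℓ : 0 < ℓ) : amalgamNorm d q p (cubeInd d c ℓ) ≠ ∞ := by
  have hq' : 0 < q.toReal := ENNReal.toReal_pos hq0 hq
  have hp' : 0 < p.toReal := ENNReal.toReal_pos hp0 hp
  rw [amalgamNorm, amalgamNormE, ellNorm, if_neg hp]
  set T : (Fin d → ℤ) → ℝ≥0∞ := fun k =>
    setLqNorm q (fun x => (‖cubeInd d c ℓ x‖₊ : ℝ≥0∞)) (unitCube d k) with hTdef
  set K : Finset (Fin d → ℤ) :=
    Fintype.piFinset (fun i => Finset.Icc ⌊c i - ℓ/2⌋ ⌊c i + ℓ/2⌋) with hKdef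
  have hTzero : ∀ k ∉ K, T k ^ p.toReal = 0 := by
    intro k hk
    have hvol : volume (cube d c ℓ ∩ unitCube d k) = 0 := by
      by_contra hv
      obtain ⟨x, hx⟩ := nonempty_of_measure_ne_zero hv
      apply hk
      rw [hKdef, Fintype.mem_piFinset]
      intro i
      have hc := hx.1 i
      have hu := hx.2 i
      rw [abs_le] at hc
      rw [Finset.mem_Icc]
      constructor
      · have : (⌊c i - ℓ/2⌋ : ℝ) ≤ c i - ℓ/2 := Int.floor_le _
        have : (⌊c i - ℓ/2⌋ : ℝ) < (k i : ℝ) + 1 := by linarith [hu.2, hc.1]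
        exact_mod_cast Int.lt_add_one_iff.mp (by exact_mod_cast this)
      · have : (k i : ℝ) ≤ c i + ℓ/2 := le_trans hu.1 (by linarith [hc.2])
        exact Int.le_floor.mpr this
    rw [hTdef]
    simp only
    rw [setLq_cubeInd hq0 hq, hvol, ENNReal.zero_rpow_of_pos (by positivity),
      ENNReal.zero_rpow_of_pos hp']
  have hsum : ∑' k, T k ^ p.toReal = ∑ k ∈ K, T k ^ p.toReal := tsum_eq_sum hTzero
  have hTle : ∀ k, T k ^ p.toReal ≤ 1 := by
    intro k
    rw [hTdef]
    simp only
    rw [setLq_cubeInd hq0 hq]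
    refine ENNReal.rpow_le_one ?_ hp'.le
    exact ENNReal.rpow_le_one (vol_cube_inter_le_one k) (by positivity)
  refine (ENNReal.rpow_lt_top_of_nonneg (by positivity) ?_).ne
  rw [hsum]
  refine ne_top_of_le_ne_top (by simp : ((K.card : ℝ≥0∞)) ≠ ⊤) ?_
  calc ∑ k ∈ K, T k ^ p.toReal ≤ ∑ _k ∈ K, (1:ℝ≥0∞) := Finset.sum_le_sum fun k _ => hTle k
    _ = K.card := by simp

end

section Helpers
variable {d : ℕ} {q p : ℝ≥0∞} {η : ℝ}

lemma div_ofReal_ne_top (hq : q ≠ ∞) (hη : 0 < η) : q / ENNReal.ofReal η ≠ ∞ := by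
  rw [Ne, ENNReal.div_eq_top]
  push_neg
  exact ⟨fun _ => (ENNReal.ofReal_pos.mpr hη).ne', fun h => absurd h hq⟩

lemma div_ofReal_toReal (hq : q ≠ ∞) (hη : 0 < η) :
    (q / ENNReal.ofReal η).toReal = q.toReal / η := by
  rw [ENNReal.toReal_div, ENNReal.toReal_ofReal hη.le]

lemma setLq_const_mul {h : (Fin d → ℝ) → ℝ≥0∞} {C : ℝ≥0∞} (hq0 : q ≠ 0) (hq : q ≠ ∞)
    (hC : C ≠ ∞) (s : Set (Fin d → ℝ)) :
    setLqNorm q (fun x => C * h x) s = C * setLqNorm q h s := by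
  have hq' : 0 < q.toReal := ENNReal.toReal_pos hq0 hq
  rw [setLqNorm, setLqNorm, if_neg hq, if_neg hq]
  have e1 : ∀ x, (C * h x) ^ q.toReal = C ^ q.toReal * h x ^ q.toReal := fun x =>
    ENNReal.mul_rpow_of_nonneg _ _ hq'.le
  simp only [e1]
  rw [lintegral_const_mul' _ _ (ENNReal.rpow_ne_top_of_nonneg hq'.le hC),
    ENNReal.mul_rpow_of_nonneg _ _ (by positivity : (0:ℝ) ≤ 1/q.toReal),
    ← ENNReal.rpow_mul, mul_one_div_cancel hq'.ne', ENNReal.rpow_one]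

lemma ellNorm_const_mul {a : (Fin d → ℤ) → ℝ≥0∞} {C : ℝ≥0∞} (hp0 : p ≠ 0) (hp : p ≠ ∞) :
    ellNorm d p (fun k => C * a k) = C * ellNorm d p a := by
  have hp' : 0 < p.toReal := ENNReal.toReal_pos hp0 hp
  rw [ellNorm, ellNorm, if_neg hp, if_neg hp]
  have e1 : ∀ k, (C * a k) ^ p.toReal = C ^ p.toReal * a k ^ p.toReal := fun k =>
    ENNReal.mul_rpow_of_nonneg _ _ hp'.le
  simp only [e1]
  rw [ENNReal.tsum_mul_left,
    ENNReal.mul_rpow_of_nonneg _ _ (by positivity : (0:ℝ) ≤ 1/p.toReal),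
    ← ENNReal.rpow_mul, mul_one_div_cancel hp'.ne', ENNReal.rpow_one]

lemma ellNorm_mono {a b : (Fin d → ℤ) → ℝ≥0∞} (hp : p ≠ ∞) (hab : ∀ k, a k ≤ b k) :
    ellNorm d p a ≤ ellNorm d p b := by
  rw [ellNorm, ellNorm, if_neg hp, if_neg hp]
  refine ENNReal.rpow_le_rpow (ENNReal.tsum_le_tsum fun k => ?_) (by positivity)
  exact ENNReal.rpow_le_rpow (hab k) ENNReal.toReal_nonneg

lemma setLq_rpow_inv {h : (Fin d → ℝ) → ℝ≥0∞} (hq0 : q ≠ 0) (hq : q ≠ ∞)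
    (hη0 : 0 < η) (hη1 : η ≤ 1) (s : Set (Fin d → ℝ)) :
    setLqNorm q (fun x => h x ^ (1/η)) s
      = (setLqNorm (q / ENNReal.ofReal η) h s) ^ (1/η) := by
  have hq' : 0 < q.toReal := ENNReal.toReal_pos hq0 hq
  have hA : (q / ENNReal.ofReal η) ≠ ∞ := div_ofReal_ne_top hq hη0
  rw [setLqNorm, setLqNorm, if_neg hq, if_neg hA, div_ofReal_toReal hq hη0]
  have e1 : ∀ x, (h x ^ (1/η)) ^ q.toReal = h x ^ (q.toReal / η) := by
    intro x
    rw [← ENNReal.rpow_mul]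
    congr 1
    field_simp
  simp only [e1]
  rw [← ENNReal.rpow_mul]
  congr 1
  field_simp

lemma ellNorm_rpow_inv {a : (Fin d → ℤ) → ℝ≥0∞} (hp0 : p ≠ 0) (hp : p ≠ ∞)
    (hη0 : 0 < η) :
    ellNorm d p (fun k => a k ^ (1/η)) = (ellNorm d (p / ENNReal.ofReal η) a) ^ (1/η) := by
  have hp' : 0 < p.toReal := ENNReal.toReal_pos hp0 hp
  have hB : (p / ENNReal.ofReal η) ≠ ∞ := div_ofReal_ne_top hp hη0
  rw [ellNorm, ellNorm, if_neg hp, if_neg hB, div_ofReal_toReal hp hη0]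
  have e1 : ∀ k, (a k ^ (1/η)) ^ p.toReal = a k ^ (p.toReal / η) := by
    intro k
    rw [← ENNReal.rpow_mul]
    congr 1
    field_simp
  simp only [e1]
  rw [← ENNReal.rpow_mul]
  congr 1
  field_simp

end Helpers

theorem key5 {d : ℕ} {q p : ℝ≥0∞} {η : ℝ} (hq0 : q ≠ 0) (hq1 : q ≤ 1) (hqp : q ≤ p)
    (hp1 : p ≤ 1) (hη0 : 0 < η) (hη : η < q.toReal)
    {m : ℕ} (Qs : Fin (m + 1) → Set (Fin d → ℝ)) (hQ : ∀ n, MeasurableSet (Qs n))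
    (μ : Fin (m + 1) → ℝ≥0∞) (hμ : ∀ n, μ n ≠ ∞) :
    ∑ n, μ n * amalgamNormE d q p ((Qs n).indicator (fun _ => 1))
      ≤ (amalgamNormE d (q / ENNReal.ofReal η) (p / ENNReal.ofReal η)
          (fun x => ∑ n, μ n ^ η * (Qs n).indicator (fun _ => 1) x)) ^ (1/η) := by
  have hq : q ≠ ∞ := ne_top_of_le_ne_top ENNReal.one_ne_top hq1
  have hp : p ≠ ∞ := ne_top_of_le_ne_top ENNReal.one_ne_top hp1
  have hp0 : p ≠ 0 := fun h => hq0 (le_antisymm (h ▸ hqp) zero_le)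
  have hq' : 0 < q.toReal := ENNReal.toReal_pos hq0 hq
  have hp' : 0 < p.toReal := ENNReal.toReal_pos hp0 hp
  have hq'1 : q.toReal ≤ 1 := by
    rw [← ENNReal.toReal_one]
    exact ENNReal.toReal_mono ENNReal.one_ne_top hq1
  have hp'1 : p.toReal ≤ 1 := by
    rw [← ENNReal.toReal_one]
    exact ENNReal.toReal_mono ENNReal.one_ne_top hp1
  have hη1 : η ≤ 1 := le_trans hη.le hq'1
  set χ : Fin (m+1) → (Fin d → ℝ) → ℝ≥0∞ := fun n => (Qs n).indicator (fun _ => 1) with hχ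
  have hχm : ∀ n, Measurable (χ n) := fun n => (measurable_const.indicator (hQ n))
  set G : (Fin d → ℝ) → ℝ≥0∞ := fun x => ∑ n, μ n ^ η * χ n x with hG
  -- pointwise bound
  have hpt : ∀ x, ∑ n, μ n * χ n x ≤ G x ^ (1/η) := by
    intro x
    have hχpow : ∀ n, (μ n * χ n x) ^ η = μ n ^ η * χ n x := by
      intro n
      rw [ENNReal.mul_rpow_of_nonneg _ _ hη0.le]
      congr 1
      by_cases hx : x ∈ Qs n <;> simp [hχ, hx, ENNReal.zero_rpow_of_pos hη0]
    calc ∑ n, μ n * χ n x ≤ (∑ n, (μ n * χ n x) ^ η) ^ (1/η) :=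
          finset_sum_le_rpow _ hη0 hη1 _
      _ = G x ^ (1/η) := by rw [hG]; simp only [hχpow]
  -- per-cube bound
  have hcube : ∀ k : Fin d → ℤ,
      ∑ n, setLqNorm q (fun x => μ n * χ n x) (unitCube d k)
        ≤ (setLqNorm (q / ENNReal.ofReal η) G (unitCube d k)) ^ (1/η) := by
    intro k
    have h1 : ∑ n, setLqNorm q (fun x => μ n * χ n x) (unitCube d k)
        ≤ setLqNorm q (fun x => ∑ n, μ n * χ n x) (unitCube d k) := by
      simp only [setLqNorm, if_neg hq]
      exact rev_minkowski_finset Finset.univ hq' hq'1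
        (fun n => ((measurable_const.mul (hχm n)).aemeasurable))
    have h2 : setLqNorm q (fun x => ∑ n, μ n * χ n x) (unitCube d k)
        ≤ setLqNorm q (fun x => G x ^ (1/η)) (unitCube d k) := by
      simp only [setLqNorm, if_neg hq]
      refine ENNReal.rpow_le_rpow (lintegral_mono fun x => ?_) (by positivity)
      exact ENNReal.rpow_le_rpow (hpt x) hq'.le
    calc _ ≤ _ := h1
      _ ≤ _ := h2
      _ = _ := setLq_rpow_inv hq0 hq hη0 hη1 _
  -- assemble
  have hstep1 : ∀ n, μ n * amalgamNormE d q p (χ n)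
      = ellNorm d p (fun k => setLqNorm q (fun x => μ n * χ n x) (unitCube d k)) := by
    intro n
    rw [amalgamNormE, ← ellNorm_const_mul hp0 hp]
    congr 1
    funext k
    rw [setLq_const_mul hq0 hq (hμ n)]
  calc ∑ n, μ n * amalgamNormE d q p (χ n)
      = ∑ n, ellNorm d p (fun k => setLqNorm q (fun x => μ n * χ n x) (unitCube d k)) := by
        simp only [hstep1]
    _ ≤ ellNorm d p (fun k => ∑ n, setLqNorm q (fun x => μ n * χ n x) (unitCube d k)) := by
        simp only [ellNorm, if_neg hp]
        exact rev_minkowski_tsum hp' hp'1 Finset.univ _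
    _ ≤ ellNorm d p (fun k => (setLqNorm (q / ENNReal.ofReal η) G (unitCube d k)) ^ (1/η)) :=
        ellNorm_mono hp hcube
    _ = (ellNorm d (p / ENNReal.ofReal η)
          (fun k => setLqNorm (q / ENNReal.ofReal η) G (unitCube d k))) ^ (1/η) :=
        ellNorm_rpow_inv hp0 hp hη0
    _ = _ := rfl

end Lemmas

section Atom

lemma rpow_ne_top' {x : ℝ≥0∞} (hx0 : x ≠ 0) (hxt : x ≠ ⊤) (e : ℝ) : x ^ e ≠ ⊤ := by
  intro h
  rw [ENNReal.rpow_eq_top_iff] at h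
  rcases h with ⟨h, _⟩ | ⟨h, _⟩
  exacts [hx0 h, hxt h]

lemma conj_facts {r r' : ℝ≥0∞} (hr1 : 1 < r) (hr2 : r < ∞) (hrr' : 1 / r + 1 / r' = 1) :
    r' ≠ 0 ∧ r' ≠ ∞ ∧ 1 < r'.toReal ∧ 1/r.toReal + 1/r'.toReal = 1 := by
  have hr0 : r ≠ 0 := (lt_trans zero_lt_one hr1).ne'
  have hrt : r ≠ ⊤ := hr2.ne
  have hr'0 : r' ≠ 0 := by
    intro h
    rw [h, ENNReal.div_zero one_ne_zero, add_top] at hrr'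
    exact ENNReal.top_ne_one hrr'
  have hr't : r' ≠ ⊤ := by
    intro h
    rw [h, ENNReal.div_top, add_zero, one_div, ENNReal.inv_eq_one] at hrr'
    exact hr1.ne' hrr'
  have hfin1 : 1/r ≠ ⊤ := (ENNReal.div_lt_top ENNReal.one_ne_top hr0).ne
  have hfin2 : 1/r' ≠ ⊤ := (ENNReal.div_lt_top ENNReal.one_ne_top hr'0).ne
  have htr := congrArg ENNReal.toReal hrr'
  rw [ENNReal.toReal_add hfin1 hfin2, ENNReal.toReal_div, ENNReal.toReal_div,
    ENNReal.toReal_one] at htr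
  have h1r : 1 < r.toReal := by
    have := ENNReal.toReal_strict_mono hrt hr1
    simpa using this
  have hrpos : 0 < r.toReal := lt_trans zero_lt_one h1r
  have hlt1 : 1 / r.toReal < 1 := (div_lt_one hrpos).mpr h1r
  have h2 : 0 < 1 / r'.toReal := by linarith
  have hr'pos : 0 < r'.toReal := by
    by_contra hcon
    push_neg at hcon
    have hz : r'.toReal = 0 := le_antisymm hcon ENNReal.toReal_nonneg
    rw [hz, div_zero] at h2
    linarith
  have hlt1' : 1 / r'.toReal < 1 := by
    have : 0 < 1 / r.toReal := by positivity
    linarith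
  exact ⟨hr'0, hr't, (div_lt_one hr'pos).mp hlt1', htr⟩

lemma holder_pair {d : ℕ} {r r' : ℝ≥0∞} (hr1 : 1 < r) (hr2 : r < ∞)
    (hrr' : 1 / r + 1 / r' = 1) {h : (Fin d → ℝ) → ℂ} (hh : Measurable h)
    {a : (Fin d → ℝ) → ℂ} (ham : Measurable a) {c : Fin d → ℝ} {ℓ : ℝ}
    (hsupp : Function.support a ⊆ cube d c ℓ) :
    ∫⁻ x, (‖h x * a x‖₊ : ℝ≥0∞) ≤
      (∫⁻ x in cube d c ℓ, (‖h x‖₊ : ℝ≥0∞) ^ r'.toReal) ^ (1/r'.toReal)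
        * eLpNorm a r volume := by
  obtain ⟨hr'0, hr't, h1r', htr⟩ := conj_facts hr1 hr2 hrr'
  have hr0 : r ≠ 0 := (lt_trans zero_lt_one hr1).ne'
  have hrt : r ≠ ⊤ := hr2.ne
  have h1r : 1 < r.toReal := by
    have := ENNReal.toReal_strict_mono hrt hr1
    simpa using this
  have hconj : r'.toReal.HolderConjugate r.toReal := by
    refine ⟨?_, by linarith, by linarith⟩
    rw [inv_one, ← one_div, ← one_div]; linarith
  have e0 : ∀ x, (‖h x * a x‖₊ : ℝ≥0∞)
      = (cube d c ℓ).indicator (fun y => (‖h y‖₊ : ℝ≥0∞) * (‖a y‖₊ : ℝ≥0∞)) x := by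
    intro x
    by_cases hx : x ∈ cube d c ℓ
    · simp [hx, nnnorm_mul]
    · have hax : a x = 0 := by
        by_contra hax
        exact hx (hsupp (by simpa [Function.mem_support] using hax))
      simp [hx, hax]
  calc ∫⁻ x, (‖h x * a x‖₊ : ℝ≥0∞)
      = ∫⁻ x in cube d c ℓ, (‖h x‖₊ : ℝ≥0∞) * (‖a x‖₊ : ℝ≥0∞) := by
        simp only [e0]
        exact lintegral_indicator (measurableSet_cube d c ℓ) _
    _ ≤ (∫⁻ x in cube d c ℓ, (‖h x‖₊ : ℝ≥0∞) ^ r'.toReal) ^ (1/r'.toReal)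
          * (∫⁻ x in cube d c ℓ, (‖a x‖₊ : ℝ≥0∞) ^ r.toReal) ^ (1/r.toReal) := by
        have := ENNReal.lintegral_mul_le_Lp_mul_Lq (volume.restrict (cube d c ℓ)) hconj
          (f := fun y => (‖h y‖₊ : ℝ≥0∞)) (g := fun y => (‖a y‖₊ : ℝ≥0∞))
          hh.enorm.aemeasurable ham.enorm.aemeasurable
        simpa using this
    _ ≤ _ := by
        refine mul_le_mul_right ?_ _
        rw [eLpNorm_eq_lintegral_rpow_enorm_toReal hr0 hrt]
        exact ENNReal.rpow_le_rpow (setLIntegral_le_lintegral _ _) (by positivity)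

lemma IsPolyDeg.continuous {d δ : ℕ} {P : (Fin d → ℝ) → ℂ} (h : IsPolyDeg d δ P) :
    Continuous P := by
  obtain ⟨coef, hc⟩ := h
  have : P = fun x => ∑ β : Fin d → Fin (δ + 1),
      if (∑ i, (β i : ℕ)) ≤ δ then coef β * ∏ i, (x i : ℂ) ^ (β i : ℕ) else 0 :=
    funext hc
  rw [this]
  refine continuous_finset_sum _ fun β _ => ?_
  by_cases hβ : (∑ i, (β i : ℕ)) ≤ δ
  · simp only [if_pos hβ]
    exact continuous_const.mul (continuous_finset_prod _ fun i _ =>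
      (Complex.continuous_ofReal.comp (continuous_apply i)).pow _)
  · simp only [if_neg hβ]
    exact continuous_const

lemma atom_mul_integrable {d : ℕ} {q r r' : ℝ≥0∞} {δ : ℕ} (hr1 : 1 < r) (hr2 : r < ∞)
    (hrr' : 1 / r + 1 / r' = 1) {h : (Fin d → ℝ) → ℂ} (hh : Measurable h)
    {a : (Fin d → ℝ) → ℂ} {c : Fin d → ℝ} {ℓ : ℝ}
    (ha : IsLocalAtom d q r δ a c ℓ)
    (hloc : (∫⁻ x in cube d c ℓ, (‖h x‖₊ : ℝ≥0∞) ^ r'.toReal) < ∞) :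
    Integrable (fun x => h x * a x) := by
  obtain ⟨hℓ, ham, hsupp, hnorm, _⟩ := ha
  obtain ⟨hr'0, hr't, h1r', htr⟩ := conj_facts hr1 hr2 hrr'
  have hV0 : ENNReal.ofReal (ℓ ^ d) ≠ 0 := (ENNReal.ofReal_pos.mpr (pow_pos hℓ d)).ne'
  have hVt : ENNReal.ofReal (ℓ ^ d) ≠ ⊤ := ENNReal.ofReal_ne_top
  have haN : eLpNorm a r volume ≠ ⊤ :=
    ne_top_of_le_ne_top (rpow_ne_top' hV0 hVt _) hnorm
  refine ⟨(hh.mul ham).aestronglyMeasurable, ?_⟩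
  show (∫⁻ x, (‖h x * a x‖₊ : ℝ≥0∞)) < ⊤
  refine lt_of_le_of_lt (holder_pair hr1 hr2 hrr' hh ham hsupp) ?_
  exact ENNReal.mul_lt_top
    (ENNReal.rpow_lt_top_of_nonneg (by positivity) hloc.ne) haN.lt_top

lemma atom_integrable {d : ℕ} {q r r' : ℝ≥0∞} {δ : ℕ} (hr1 : 1 < r) (hr2 : r < ∞)
    (hrr' : 1 / r + 1 / r' = 1) {a : (Fin d → ℝ) → ℂ} {c : Fin d → ℝ} {ℓ : ℝ}
    (ha : IsLocalAtom d q r δ a c ℓ) : Integrable a := by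
  have hℓ : 0 < ℓ := ha.1
  have hloc : (∫⁻ x in cube d c ℓ, (‖(1:ℂ)‖₊ : ℝ≥0∞) ^ r'.toReal) < ∞ := by
    simp only [nnnorm_one, ENNReal.coe_one, ENNReal.one_rpow]
    rw [setLIntegral_one]
    rw [volume_cube d c hℓ.le]
    exact ENNReal.ofReal_lt_top
  have := atom_mul_integrable hr1 hr2 hrr' measurable_const (h := fun _ => (1:ℂ)) ha hloc
  simpa using this

lemma atom_moment_zero {d : ℕ} {q r r' : ℝ≥0∞} {δ : ℕ} (hr1 : 1 < r) (hr2 : r < ∞)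
    (hrr' : 1 / r + 1 / r' = 1) {a : (Fin d → ℝ) → ℂ} {c : Fin d → ℝ} {ℓ : ℝ}
    (ha : IsLocalAtom d q r δ a c ℓ) (hsmall : ℓ ^ d < 1)
    {Pc : (Fin d → ℝ) → ℂ} (hP : IsPolyDeg d δ Pc) :
    Integrable (fun x => Pc x * a x) ∧ ∫ x, Pc x * a x = 0 := by
  obtain ⟨hℓ, ham, hsupp, hnorm, hmom⟩ := ha
  have haint : Integrable a := atom_integrable hr1 hr2 hrr'
    ⟨hℓ, ham, hsupp, hnorm, hmom⟩
  obtain ⟨coef, hcoef⟩ := hP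
  have hmint : ∀ β : Fin d → Fin (δ + 1),
      Integrable (fun x => (∏ i, (x i : ℂ) ^ (β i : ℕ)) * a x) := by
    intro β
    set mβ : (Fin d → ℝ) → ℂ := fun x => ∏ i, (x i : ℂ) ^ (β i : ℕ) with hmβ
    have hcont : Continuous mβ := continuous_finset_prod _ fun i _ =>
      (Complex.continuous_ofReal.comp (continuous_apply i)).pow _
    obtain ⟨C, hC⟩ := (isCompact_cube d c ℓ).exists_bound_of_continuousOn
      hcont.continuousOn
    have heq : ∀ x, (cube d c ℓ).indicator mβ x * a x = mβ x * a x := by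
      intro x
      by_cases hx : x ∈ cube d c ℓ
      · simp [hx]
      · have hax : a x = 0 := by
          by_contra hax
          exact hx (hsupp (by simpa [Function.mem_support] using hax))
        simp [hx, hax]
    refine (Integrable.bdd_mul (c := max C 0) haint
      ((hcont.measurable.indicator (measurableSet_cube d c ℓ)).aestronglyMeasurable)
      (Filter.Eventually.of_forall fun x => ?_)).congr (Filter.Eventually.of_forall fun x => heq x)
    by_cases hx : x ∈ cube d c ℓ
    · simp only [Set.indicator_of_mem hx]
      exact le_trans (hC x hx) (le_max_left _ _)
    · simp [Set.indicator_of_notMem hx]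
  have hPa_eq : ∀ x, Pc x * a x = ∑ β : Fin d → Fin (δ + 1),
      (if (∑ i, (β i : ℕ)) ≤ δ then coef β * ((∏ i, (x i : ℂ) ^ (β i : ℕ)) * a x)
       else 0) := by
    intro x
    rw [hcoef x, Finset.sum_mul]
    refine Finset.sum_congr rfl fun β _ => ?_
    by_cases hβ : (∑ i, (β i : ℕ)) ≤ δ
    · simp only [if_pos hβ]; ring
    · simp only [if_neg hβ, zero_mul]
  have hterm : ∀ β : Fin d → Fin (δ + 1), Integrable (fun x =>
      if (∑ i, (β i : ℕ)) ≤ δ then coef β * ((∏ i, (x i : ℂ) ^ (β i : ℕ)) * a x)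
      else 0) := by
    intro β
    by_cases hβ : (∑ i, (β i : ℕ)) ≤ δ
    · simp only [if_pos hβ]
      exact (hmint β).const_mul _
    · simp only [if_neg hβ]
      exact integrable_zero _ _ _
  constructor
  · refine (integrable_finset_sum Finset.univ fun β _ => hterm β).congr ?_
    exact Filter.Eventually.of_forall fun x => (hPa_eq x).symm
  · calc ∫ x, Pc x * a x
        = ∫ x, ∑ β : Fin d → Fin (δ + 1),
            (if (∑ i, (β i : ℕ)) ≤ δ then coef β * ((∏ i, (x i : ℂ) ^ (β i : ℕ)) * a x)
             else 0) := by
          refine integral_congr_ae (Filter.Eventually.of_forall fun x => hPa_eq x)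
      _ = ∑ β : Fin d → Fin (δ + 1), ∫ x,
            (if (∑ i, (β i : ℕ)) ≤ δ then coef β * ((∏ i, (x i : ℂ) ^ (β i : ℕ)) * a x)
             else 0) := integral_finset_sum _ fun β _ => hterm β
      _ = 0 := by
          refine Finset.sum_eq_zero fun β _ => ?_
          by_cases hβ : (∑ i, (β i : ℕ)) ≤ δ
          · simp only [if_pos hβ]
            rw [integral_const_mul, hmom hsmall (fun i => (β i : ℕ)) hβ, mul_zero]
          · simp only [if_neg hβ, integral_zero]

lemma sub_poly_loc_finite {d : ℕ} {r' : ℝ≥0∞} (h1r' : 1 ≤ r'.toReal)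
    {g : (Fin d → ℝ) → ℂ} (hg : Measurable g) {c : Fin d → ℝ} {ℓ : ℝ} (hℓ : 0 ≤ ℓ)
    (hI : (∫⁻ x in cube d c ℓ, (‖g x‖₊ : ℝ≥0∞) ^ r'.toReal) < ∞)
    {Pc : (Fin d → ℝ) → ℂ} (hPc : Continuous Pc) :
    (∫⁻ x in cube d c ℓ, (‖g x - Pc x‖₊ : ℝ≥0∞) ^ r'.toReal) < ∞ := by
  obtain ⟨C, hC⟩ := (isCompact_cube d c ℓ).exists_bound_of_continuousOn hPc.continuousOn
  set K : ℝ≥0∞ := ENNReal.ofReal C ^ r'.toReal with hK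
  have hKt : K ≠ ⊤ := ENNReal.rpow_ne_top_of_nonneg (by linarith) ENNReal.ofReal_ne_top
  have h2t : (2:ℝ≥0∞) ^ (r'.toReal - 1) ≠ ⊤ :=
    ENNReal.rpow_ne_top_of_nonneg (by linarith) (by simp)
  have hbd : ∀ x ∈ cube d c ℓ, (‖g x - Pc x‖₊ : ℝ≥0∞) ^ r'.toReal
      ≤ (2:ℝ≥0∞) ^ (r'.toReal - 1) * ((‖g x‖₊ : ℝ≥0∞) ^ r'.toReal + K) := by
    intro x hx
    have h1 : (‖g x - Pc x‖₊ : ℝ≥0∞) ≤ (‖g x‖₊ : ℝ≥0∞) + ENNReal.ofReal C := by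
      calc (‖g x - Pc x‖₊ : ℝ≥0∞) ≤ (‖g x‖₊ : ℝ≥0∞) + (‖Pc x‖₊ : ℝ≥0∞) := by
            rw [← ENNReal.coe_add]
            exact_mod_cast nnnorm_sub_le _ _
        _ ≤ (‖g x‖₊ : ℝ≥0∞) + ENNReal.ofReal C := by
            refine add_le_add le_rfl ?_
            rw [← ENNReal.ofReal_coe_nnreal]
            exact ENNReal.ofReal_le_ofReal (by simpa [coe_nnnorm] using hC x hx)
    calc (‖g x - Pc x‖₊ : ℝ≥0∞) ^ r'.toReal
        ≤ ((‖g x‖₊ : ℝ≥0∞) + ENNReal.ofReal C) ^ r'.toReal :=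
          ENNReal.rpow_le_rpow h1 (by linarith)
      _ ≤ (2:ℝ≥0∞) ^ (r'.toReal - 1) * ((‖g x‖₊ : ℝ≥0∞) ^ r'.toReal + K) :=
          ENNReal.rpow_add_le_mul_rpow_add_rpow _ _ h1r'
  calc ∫⁻ x in cube d c ℓ, (‖g x - Pc x‖₊ : ℝ≥0∞) ^ r'.toReal
      ≤ ∫⁻ x in cube d c ℓ,
          (2:ℝ≥0∞) ^ (r'.toReal - 1) * ((‖g x‖₊ : ℝ≥0∞) ^ r'.toReal + K) := by
        refine lintegral_mono_ae ?_
        rw [ae_restrict_iff' (measurableSet_cube d c ℓ)]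
        exact Filter.Eventually.of_forall hbd
    _ = (2:ℝ≥0∞) ^ (r'.toReal - 1) *
          ((∫⁻ x in cube d c ℓ, (‖g x‖₊ : ℝ≥0∞) ^ r'.toReal) + K * volume (cube d c ℓ)) := by
        rw [lintegral_const_mul' _ _ h2t]
        congr 1
        rw [lintegral_add_right _ measurable_const, setLIntegral_const]
    _ < ∞ := by
        refine ENNReal.mul_lt_top h2t.lt_top ?_
        refine ENNReal.add_lt_top.mpr ⟨hI, ENNReal.mul_lt_top hKt.lt_top ?_⟩
        rw [volume_cube d c hℓ]
        exact ENNReal.ofReal_lt_top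

lemma bound_aux {d : ℕ} {q r r' : ℝ≥0∞} {δ : ℕ} (hr1 : 1 < r) (hr2 : r < ∞)
    (hrr' : 1 / r + 1 / r' = 1) {h : (Fin d → ℝ) → ℂ} (hh : Measurable h)
    {a : (Fin d → ℝ) → ℂ} {c : Fin d → ℝ} {ℓ : ℝ}
    (ha : IsLocalAtom d q r δ a c ℓ) :
    (‖∫ x, h x * a x‖₊ : ℝ≥0∞) ≤ ENNReal.ofReal (ℓ ^ d) ^ ((1:ℝ) - 1/q.toReal) *
      ((ENNReal.ofReal (ℓ ^ d))⁻¹ *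
        ∫⁻ x in cube d c ℓ, (‖h x‖₊ : ℝ≥0∞) ^ r'.toReal) ^ (1/r'.toReal) := by
  obtain ⟨hℓ, ham, hsupp, hnorm, _⟩ := ha
  obtain ⟨hr'0, hr't, h1r', htr⟩ := conj_facts hr1 hr2 hrr'
  set V : ℝ≥0∞ := ENNReal.ofReal (ℓ ^ d) with hVdef
  have hV0 : V ≠ 0 := (ENNReal.ofReal_pos.mpr (pow_pos hℓ d)).ne'
  have hVt : V ≠ ⊤ := ENNReal.ofReal_ne_top
  set I : ℝ≥0∞ := ∫⁻ x in cube d c ℓ, (‖h x‖₊ : ℝ≥0∞) ^ r'.toReal with hIdef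
  have hsplit : I ^ (1/r'.toReal) = V ^ (1/r'.toReal) * (V⁻¹ * I) ^ (1/r'.toReal) := by
    rw [← ENNReal.mul_rpow_of_nonneg _ _ (by positivity : (0:ℝ) ≤ 1/r'.toReal),
      ← mul_assoc, ENNReal.mul_inv_cancel hV0 hVt, one_mul]
  calc (‖∫ x, h x * a x‖₊ : ℝ≥0∞)
      ≤ ∫⁻ x, (‖h x * a x‖₊ : ℝ≥0∞) := enorm_integral_le_lintegral_enorm _
    _ ≤ I ^ (1/r'.toReal) * eLpNorm a r volume :=
        holder_pair hr1 hr2 hrr' hh ham hsupp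
    _ ≤ I ^ (1/r'.toReal) * V ^ (1/r.toReal - 1/q.toReal) := mul_le_mul_right hnorm _
    _ = V ^ (1/r'.toReal) * V ^ (1/r.toReal - 1/q.toReal) * (V⁻¹ * I) ^ (1/r'.toReal) := by
        rw [hsplit]; ring
    _ = V ^ ((1:ℝ) - 1/q.toReal) * (V⁻¹ * I) ^ (1/r'.toReal) := by
        rw [← ENNReal.rpow_add _ _ hV0 hVt]
        congr 2
        linarith

lemma atom_bound {d : ℕ} {q p r r' : ℝ≥0∞} {δ : ℕ}
    (hq0 : q ≠ 0) (hq1 : q ≤ 1) (hqp : q ≤ p) (hp1 : p ≤ 1)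
    (hr1 : 1 < r) (hr2 : r < ∞) (hrr' : 1 / r + 1 / r' = 1)
    {g : (Fin d → ℝ) → ℂ} (hg : Measurable g)
    (hgloc : ∀ (c : Fin d → ℝ) (ℓ : ℝ), 0 < ℓ →
      (∫⁻ x in cube d c ℓ, (‖g x‖₊ : ℝ≥0∞) ^ r'.toReal) < ∞)
    {P : (Fin d → ℝ) → ℝ → (Fin d → ℝ) → ℂ}
    (hPpoly : ∀ (c : Fin d → ℝ) (ℓ : ℝ), 0 < ℓ → IsPolyDeg d δ (P c ℓ))
    {a : (Fin d → ℝ) → ℂ} {c : Fin d → ℝ} {ℓ : ℝ}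
    (ha : IsLocalAtom d q r δ a c ℓ) :
    Integrable (fun x => g x * a x) ∧
    (‖∫ x, g x * a x‖₊ : ℝ≥0∞) ≤ ENNReal.ofReal (ℓ ^ d) ^ ((1:ℝ) - 1/q.toReal)
      * phiOne d q p c ℓ * campNormLoc d q p r' g P := by
  have hℓ : 0 < ℓ := ha.1
  obtain ⟨hr'0, hr't, h1r', htr⟩ := conj_facts hr1 hr2 hrr'
  have hq : q ≠ ∞ := ne_top_of_le_ne_top ENNReal.one_ne_top hq1
  have hp0 : p ≠ 0 := fun h => hq0 (le_antisymm (h ▸ hqp) zero_le)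
  have hp : p ≠ ∞ := ne_top_of_le_ne_top ENNReal.one_ne_top hp1
  set V : ℝ≥0∞ := ENNReal.ofReal (ℓ ^ d) with hVdef
  have hV0 : V ≠ 0 := (ENNReal.ofReal_pos.mpr (pow_pos hℓ d)).ne'
  have hVt : V ≠ ⊤ := ENNReal.ofReal_ne_top
  have hφ0 : phiOne d q p c ℓ ≠ 0 := by
    rw [phiOne, div_eq_mul_inv]
    exact mul_ne_zero (amalgam_cubeInd_ne_zero hq0 hq hp0 hp hℓ) (ENNReal.inv_ne_zero.mpr hVt)
  have hφt : phiOne d q p c ℓ ≠ ⊤ := by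
    rw [phiOne, div_eq_mul_inv]
    exact ENNReal.mul_ne_top (amalgam_cubeInd_ne_top hq0 hq hp0 hp hℓ)
      (ENNReal.inv_ne_top.mpr hV0)
  have hga : Integrable (fun x => g x * a x) :=
    atom_mul_integrable hr1 hr2 hrr' hg ha (hgloc c ℓ hℓ)
  refine ⟨hga, ?_⟩
  have hYle : ∀ Y : ℝ≥0∞, (phiOne d q p c ℓ)⁻¹ * Y ≤ campNormLoc d q p r' g P →
      Y ≤ phiOne d q p c ℓ * campNormLoc d q p r' g P := by
    intro Y hY
    calc Y = phiOne d q p c ℓ * ((phiOne d q p c ℓ)⁻¹ * Y) := by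
          rw [← mul_assoc, ENNReal.mul_inv_cancel hφ0 hφt, one_mul]
      _ ≤ _ := mul_le_mul_right hY _
  by_cases hsmall : ℓ ^ d < 1
  · obtain ⟨hPaInt, hPa0⟩ := atom_moment_zero hr1 hr2 hrr' ha hsmall (hPpoly c ℓ hℓ)
    have hval : ∫ x, g x * a x = ∫ x, (g x - P c ℓ x) * a x := by
      have hsub : ∫ x, (g x - P c ℓ x) * a x
          = (∫ x, g x * a x) - ∫ x, P c ℓ x * a x := by
        simp only [sub_mul]
        exact integral_sub hga hPaInt
      rw [hsub, hPa0, sub_zero]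
    have hbd := bound_aux hr1 hr2 hrr' (hg.sub (hPpoly c ℓ hℓ).continuous.measurable) ha
    have hcamp : (phiOne d q p c ℓ)⁻¹ * ((V⁻¹ *
        ∫⁻ x in cube d c ℓ, (‖g x - P c ℓ x‖₊ : ℝ≥0∞) ^ r'.toReal) ^ (1/r'.toReal))
        ≤ campNormLoc d q p r' g P := by
      rw [campNormLoc]
      refine le_trans ?_ le_add_self
      refine le_iSup_of_le c ?_
      exact le_iSup_of_le ⟨ℓ, hℓ, hsmall⟩ le_rfl
    calc (‖∫ x, g x * a x‖₊ : ℝ≥0∞)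
        = (‖∫ x, (g x - P c ℓ x) * a x‖₊ : ℝ≥0∞) := by rw [hval]
      _ ≤ V ^ ((1:ℝ) - 1/q.toReal) * ((V⁻¹ *
            ∫⁻ x in cube d c ℓ, (‖g x - P c ℓ x‖₊ : ℝ≥0∞) ^ r'.toReal) ^ (1/r'.toReal)) := hbd
      _ ≤ V ^ ((1:ℝ) - 1/q.toReal) * (phiOne d q p c ℓ * campNormLoc d q p r' g P) :=
          mul_le_mul_right (hYle _ hcamp) _
      _ = _ := by rw [mul_assoc]
  · push_neg at hsmall
    have hbd := bound_aux hr1 hr2 hrr' hg ha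
    have hcamp : (phiOne d q p c ℓ)⁻¹ * ((V⁻¹ *
        ∫⁻ x in cube d c ℓ, (‖g x‖₊ : ℝ≥0∞) ^ r'.toReal) ^ (1/r'.toReal))
        ≤ campNormLoc d q p r' g P := by
      rw [campNormLoc]
      refine le_trans ?_ le_self_add
      refine le_iSup_of_le c ?_
      exact le_iSup_of_le ⟨ℓ, hℓ, hsmall⟩ le_rfl
    calc (‖∫ x, g x * a x‖₊ : ℝ≥0∞)
        ≤ V ^ ((1:ℝ) - 1/q.toReal) * ((V⁻¹ *
            ∫⁻ x in cube d c ℓ, (‖g x‖₊ : ℝ≥0∞) ^ r'.toReal) ^ (1/r'.toReal)) := hbd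
      _ ≤ V ^ ((1:ℝ) - 1/q.toReal) * (phiOne d q p c ℓ * campNormLoc d q p r' g P) :=
          mul_le_mul_right (hYle _ hcamp) _
      _ = _ := by rw [mul_assoc]

end Atom

/-- Duality pairing estimate: for `0 < q ≤ p ≤ 1`, `1 < r < ∞`,
`g` in the local Campanato space `𝓛^{loc}_{r',φ₁,δ}` (with projection polynomials `P`),
and any finite linear combination `f = ∑ λ_n a_n` of local `(q,r,δ)`-atoms,
`|∫ g f| ≤ ‖∑ (|λ_n|/‖χ_{Q^n}‖_q)^η χ_{Q^n}‖_{q/η,p/η}^{1/η} · ‖g‖_{𝓛^{loc}_{r',φ₁,δ}}`. -/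
theorem stmt18 (d : ℕ) (hd : 0 < d) (q p r r' : ℝ≥0∞) (η : ℝ) (δ : ℕ)
    (hq0 : 0 < q) (hqp : q ≤ p) (hp1 : p ≤ 1) (hr1 : 1 < r) (hr2 : r < ∞)
    (hrr' : 1 / r + 1 / r' = 1)
    (hδ : ⌊(d : ℝ) * (1 / q.toReal - 1)⌋ ≤ (δ : ℤ))
    (hη0 : 0 < η) (hη : η < q.toReal)
    (g : (Fin d → ℝ) → ℂ) (hg : Measurable g)
    (hgloc : ∀ (c : Fin d → ℝ) (ℓ : ℝ), 0 < ℓ →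
      (∫⁻ x in cube d c ℓ, (‖g x‖₊ : ℝ≥0∞) ^ r'.toReal) < ∞)
    (P : (Fin d → ℝ) → ℝ → (Fin d → ℝ) → ℂ)
    (hPpoly : ∀ (c : Fin d → ℝ) (ℓ : ℝ), 0 < ℓ → IsPolyDeg d δ (P c ℓ))
    (hPorth : ∀ (c : Fin d → ℝ) (ℓ : ℝ), 0 < ℓ → ∀ Q : (Fin d → ℝ) → ℂ,
      IsPolyDeg d δ Q → ∫ x in cube d c ℓ, (g x - P c ℓ x) * Q x = 0)
    (m : ℕ) (a : Fin (m + 1) → (Fin d → ℝ) → ℂ) (c : Fin (m + 1) → Fin d → ℝ)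
    (ℓ : Fin (m + 1) → ℝ) (lam : Fin (m + 1) → ℂ)
    (ha : ∀ n, IsLocalAtom d q r δ (a n) (c n) (ℓ n)) :
    (‖∫ x, g x * ∑ n, lam n * a n x‖₊ : ℝ≥0∞) ≤
      (amalgamNormE d (q / ENNReal.ofReal η) (p / ENNReal.ofReal η)
        (fun x => ∑ n, ((‖lam n‖₊ : ℝ≥0∞) / eLpNorm (cubeInd d (c n) (ℓ n)) q volume) ^ η *
          (cube d (c n) (ℓ n)).indicator (fun _ => (1 : ℝ≥0∞)) x)) ^ (1 / η) *
      campNormLoc d q p r' g P := by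
  have hq0' : q ≠ 0 := hq0.ne'
  have hq1 : q ≤ 1 := le_trans hqp hp1
  have hq : q ≠ ∞ := ne_top_of_le_ne_top ENNReal.one_ne_top hq1
  have hatom := fun n => atom_bound hq0' hq1 hqp hp1 hr1 hr2 hrr' hg hgloc hPpoly (ha n)
  set V : Fin (m+1) → ℝ≥0∞ := fun n => ENNReal.ofReal (ℓ n ^ d) with hV
  have hV0 : ∀ n, V n ≠ 0 := fun n => (ENNReal.ofReal_pos.mpr (pow_pos (ha n).1 d)).ne'
  have hVt : ∀ n, V n ≠ ⊤ := fun n => ENNReal.ofReal_ne_top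
  set μ : Fin (m+1) → ℝ≥0∞ := fun n =>
    (‖lam n‖₊ : ℝ≥0∞) / eLpNorm (cubeInd d (c n) (ℓ n)) q volume with hμdef
  have heLp : ∀ n, eLpNorm (cubeInd d (c n) (ℓ n)) q volume = V n ^ (1/q.toReal) := by
    intro n
    rw [cubeInd, eLpNorm_indicator_const (measurableSet_cube _ _ _) hq0' hq,
      volume_cube d (c n) (ha n).1.le]
    simp [hV]
  have hμ : ∀ n, μ n = (‖lam n‖₊ : ℝ≥0∞) * V n ^ (-(1/q.toReal)) := by
    intro n
    rw [hμdef]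
    simp only
    rw [heLp n, div_eq_mul_inv, ← ENNReal.rpow_neg]
  have hμt : ∀ n, μ n ≠ ⊤ := by
    intro n
    rw [hμ]
    exact ENNReal.mul_ne_top ENNReal.coe_ne_top (rpow_ne_top' (hV0 n) (hVt n) _)
  have hint : ∀ n, Integrable (fun x => g x * a n x) := fun n => (hatom n).1
  have hsplit : ∫ x, g x * ∑ n, lam n * a n x = ∑ n, lam n * ∫ x, g x * a n x := by
    have h1 : ∀ x, g x * ∑ n, lam n * a n x = ∑ n, lam n * (g x * a n x) := by
      intro x
      rw [Finset.mul_sum]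
      exact Finset.sum_congr rfl fun n _ => by ring
    calc ∫ x, g x * ∑ n, lam n * a n x = ∫ x, ∑ n, lam n * (g x * a n x) := by
          simp only [h1]
      _ = ∑ n, ∫ x, lam n * (g x * a n x) :=
          integral_finset_sum _ fun n _ => (hint n).const_mul _
      _ = ∑ n, lam n * ∫ x, g x * a n x :=
          Finset.sum_congr rfl fun n _ => integral_const_mul _ _
  have hnn : (‖∫ x, g x * ∑ n, lam n * a n x‖₊ : ℝ≥0∞)
      ≤ ∑ n, (‖lam n‖₊ : ℝ≥0∞) * (‖∫ x, g x * a n x‖₊ : ℝ≥0∞) := by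
    rw [hsplit]
    calc (‖∑ n, lam n * ∫ x, g x * a n x‖₊ : ℝ≥0∞)
        ≤ ((∑ n, ‖lam n * ∫ x, g x * a n x‖₊ : ℝ≥0) : ℝ≥0∞) :=
          ENNReal.coe_le_coe.mpr (nnnorm_sum_le _ _)
      _ = ∑ n, ((‖lam n * ∫ x, g x * a n x‖₊ : ℝ≥0) : ℝ≥0∞) := ENNReal.coe_finset_sum _ _
      _ = ∑ n, (‖lam n‖₊ : ℝ≥0∞) * (‖∫ x, g x * a n x‖₊ : ℝ≥0∞) := by
          refine Finset.sum_congr rfl fun n _ => ?_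
          rw [nnnorm_mul, ENNReal.coe_mul]
  have hterm : ∀ n, (‖lam n‖₊ : ℝ≥0∞) * (‖∫ x, g x * a n x‖₊ : ℝ≥0∞)
      ≤ μ n * amalgamNormE d q p ((cube d (c n) (ℓ n)).indicator (fun _ => 1))
          * campNormLoc d q p r' g P := by
    intro n
    have h2 := (hatom n).2
    have hamalg : amalgamNorm d q p (cubeInd d (c n) (ℓ n))
        = amalgamNormE d q p ((cube d (c n) (ℓ n)).indicator (fun _ => 1)) := by
      rw [amalgamNorm]
      congr 1
      funext x
      exact cubeInd_nnnorm d (c n) (ℓ n) x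
    have hVpow : V n ^ ((1:ℝ) - 1/q.toReal) * (V n)⁻¹ = V n ^ (-(1/q.toReal)) := by
      rw [← ENNReal.rpow_neg_one (V n), ← ENNReal.rpow_add _ _ (hV0 n) (hVt n)]
      congr 1
      ring
    have halg : (‖lam n‖₊ : ℝ≥0∞) *
        (V n ^ ((1:ℝ) - 1/q.toReal) * phiOne d q p (c n) (ℓ n))
        = μ n * amalgamNormE d q p ((cube d (c n) (ℓ n)).indicator (fun _ => 1)) := by
      rw [phiOne, hamalg, div_eq_mul_inv, hμ n]
      calc (‖lam n‖₊ : ℝ≥0∞) * (V n ^ ((1:ℝ) - 1/q.toReal) *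
            (amalgamNormE d q p ((cube d (c n) (ℓ n)).indicator (fun _ => 1)) * (V n)⁻¹))
          = (‖lam n‖₊ : ℝ≥0∞) * (V n ^ ((1:ℝ) - 1/q.toReal) * (V n)⁻¹) *
            amalgamNormE d q p ((cube d (c n) (ℓ n)).indicator (fun _ => 1)) := by ring
        _ = _ := by rw [hVpow, mul_assoc]
    calc (‖lam n‖₊ : ℝ≥0∞) * (‖∫ x, g x * a n x‖₊ : ℝ≥0∞)
        ≤ (‖lam n‖₊ : ℝ≥0∞) * (V n ^ ((1:ℝ) - 1/q.toReal) * phiOne d q p (c n) (ℓ n)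
            * campNormLoc d q p r' g P) := by
          refine mul_le_mul_right ?_ _
          rw [mul_assoc] at h2 ⊢
          exact h2
      _ = (‖lam n‖₊ : ℝ≥0∞) * (V n ^ ((1:ℝ) - 1/q.toReal) * phiOne d q p (c n) (ℓ n))
            * campNormLoc d q p r' g P := by ring
      _ = _ := by rw [halg]
  calc (‖∫ x, g x * ∑ n, lam n * a n x‖₊ : ℝ≥0∞)
      ≤ ∑ n, (‖lam n‖₊ : ℝ≥0∞) * (‖∫ x, g x * a n x‖₊ : ℝ≥0∞) := hnn
    _ ≤ ∑ n, μ n * amalgamNormE d q p ((cube d (c n) (ℓ n)).indicator (fun _ => 1))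
          * campNormLoc d q p r' g P := Finset.sum_le_sum fun n _ => hterm n
    _ = (∑ n, μ n * amalgamNormE d q p ((cube d (c n) (ℓ n)).indicator (fun _ => 1)))
          * campNormLoc d q p r' g P := by rw [Finset.sum_mul]
    _ ≤ _ := by
        refine mul_le_mul_left ?_ _
        exact key5 hq0' hq1 hqp hp1 hη0 hη
          (fun n => cube d (c n) (ℓ n)) (fun n => measurableSet_cube _ _ _) μ hμt


end
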